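/- Let a > 0, b ≥ 0, c ≥ 0, and T > 0. Then there exists an initial value y₀ > 0 such that no function y : ℝ → ℝ satisfies simultaneously y(0) = y₀ and, for every t ∈ [0,T], y has derivative a·y(t)² − b·y(t) − c at t within [0,T]. That is, the scalar Riccati equation ẏ = a·y² − b·y − c with sufficiently large initial value has no solution on all of [0,T] (it explodes before time T). -/

import Mathlib

open Set Filter Topology

/-- Finite-time blow-up of the scalar Riccati equation `ẏ = a·y² − b·y − c`
with positive quadratic coefficient: for sufficiently large initial data no
solution exists on all of `[0,T]`. -/
theorem scalar_riccati_explosion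
    (a b c T : ℝ) (ha : 0 < a) (hb : 0 ≤ b) (hc : 0 ≤ c) (hT : 0 < T) :
    ∃ y₀ : ℝ, 0 < y₀ ∧
      ∀ y : ℝ → ℝ,
        ¬ (y 0 = y₀ ∧ ∀ t ∈ Set.Icc (0 : ℝ) T,
            HasDerivWithinAt y (a * (y t) ^ 2 - b * y t - c) (Set.Icc (0 : ℝ) T) t) := by
  set y₀ : ℝ := max (max (4 * b / a) (2 * Real.sqrt (c / a))) (max 1 (4 / (a * T))) with hy₀def
  have h1le : (1 : ℝ) ≤ y₀ := le_trans (le_max_left 1 _) (le_max_right _ _)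
  have hy₀pos : 0 < y₀ := lt_of_lt_of_le one_pos h1le
  have h4aT : 4 / (a * T) ≤ y₀ := le_trans (le_max_right 1 _) (le_max_right _ _)
  -- key bound: for z ≥ y₀, b z + c ≤ (a/2) z²
  have hbound : ∀ z : ℝ, y₀ ≤ z → b * z + c ≤ a / 2 * z ^ 2 := by
    intro z hz
    have hz1 : (1 : ℝ) ≤ z := le_trans h1le hz
    have hzpos : 0 < z := lt_of_lt_of_le one_pos hz1
    have hb' : 4 * b / a ≤ z :=
      le_trans (le_trans (le_max_left _ _) (le_max_left _ _)) hz
    have hc' : 2 * Real.sqrt (c / a) ≤ z :=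
      le_trans (le_trans (le_max_right _ _) (le_max_left _ _)) hz
    have h4b : 4 * b ≤ a * z := by
      rw [div_le_iff₀ ha] at hb'; linarith [hb']
    have hbz : b * z ≤ a / 4 * z ^ 2 := by nlinarith
    have hsq : Real.sqrt (c / a) ^ 2 = c / a := Real.sq_sqrt (div_nonneg hc ha.le)
    have hcz : c ≤ a / 4 * z ^ 2 := by
      have h2 : Real.sqrt (c / a) ≤ z / 2 := by linarith
      have h3 : Real.sqrt (c / a) ^ 2 ≤ (z / 2) ^ 2 :=
        pow_le_pow_left₀ (Real.sqrt_nonneg _) h2 2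
      rw [hsq] at h3
      have := (div_le_iff₀ ha).mp (le_trans h3 (le_of_eq rfl))
      nlinarith
    linarith
  have hgrow : ∀ z : ℝ, y₀ ≤ z → a / 2 * z ^ 2 ≤ a * z ^ 2 - b * z - c := by
    intro z hz; have := hbound z hz; linarith
  refine ⟨y₀, hy₀pos, ?_⟩
  rintro y ⟨hy0, hode⟩
  -- continuity of y on [0,T]
  have hcont : ContinuousOn y (Icc (0:ℝ) T) := fun t ht => (hode t ht).continuousWithinAt
  -- Step A: y stays ≥ y₀ on [0,T]
  have hlow : ∀ t ∈ Icc (0:ℝ) T, y₀ ≤ y t := by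
    by_contra hne
    push_neg at hne
    obtain ⟨s, hsmem, hs⟩ := hne
    have hs0 : 0 ≤ s := hsmem.1
    have hsT : s ≤ T := hsmem.2
    set K : Set ℝ := Icc 0 s ∩ y ⁻¹' (Ici y₀) with hKdef
    have hKsub : K ⊆ Icc (0:ℝ) T := fun t ht => ⟨ht.1.1, le_trans ht.1.2 hsT⟩
    have hKne : K.Nonempty := ⟨0, ⟨le_refl 0, hs0⟩, by simp [hy0]⟩
    have hKbdd : BddAbove K := ⟨s, fun t ht => ht.1.2⟩
    have hKclosed : IsClosed K := by
      apply ContinuousOn.preimage_isClosed_of_isClosed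
        (hcont.mono (Icc_subset_Icc le_rfl hsT)) isClosed_Icc isClosed_Ici
    set t₀ := sSup K with ht₀def
    have ht₀K : t₀ ∈ K := hKclosed.csSup_mem hKne hKbdd
    have ht₀s : t₀ ≤ s := ht₀K.1.2
    have ht₀0 : 0 ≤ t₀ := ht₀K.1.1
    have hyt₀ : y₀ ≤ y t₀ := ht₀K.2
    have ht₀lt : t₀ < s := by
      rcases lt_or_eq_of_le ht₀s with h | h
      · exact h
      · exfalso; rw [h] at hyt₀; exact absurd hs (not_lt.mpr hyt₀)
    have hafter : ∀ t ∈ Ioc t₀ s, y t < y₀ := by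
      intro t ht
      by_contra hge
      push_neg at hge
      have : t ∈ K := ⟨⟨le_trans ht₀0 ht.1.le, ht.2⟩, hge⟩
      exact absurd (le_csSup hKbdd this) (not_le.mpr ht.1)
    -- derivative at t₀ is positive
    set d := a * (y t₀) ^ 2 - b * y t₀ - c with hddef
    have hdpos : 0 < d := by
      have h := hgrow (y t₀) hyt₀
      have hyt1 : (1:ℝ) ≤ y t₀ := le_trans h1le hyt₀
      simp only [hddef]
      have hsq1 : (1:ℝ) ≤ (y t₀) ^ 2 := by nlinarith
      nlinarith [mul_nonneg ha.le (sub_nonneg.mpr hsq1), h]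
    have ht₀T : t₀ ∈ Icc (0:ℝ) T := ⟨ht₀0, le_trans ht₀s hsT⟩
    have hder := hode t₀ ht₀T
    rw [hasDerivWithinAt_iff_tendsto_slope] at hder
    have hsub : Ioc t₀ s ⊆ Icc (0:ℝ) T \ {t₀} := by
      intro t ht
      exact ⟨⟨le_trans ht₀0 ht.1.le, le_trans ht.2 hsT⟩, ne_of_gt ht.1⟩
    have hten : Tendsto (slope y t₀) (𝓝[Ioc t₀ s] t₀) (𝓝 d) :=
      hder.mono_left (nhdsWithin_mono _ hsub)
    have hNe : (𝓝[Ioc t₀ s] t₀).NeBot := by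
      rw [nhdsWithin_Ioc_eq_nhdsGT ht₀lt]
      infer_instance
    have hev : ∀ᶠ t in 𝓝[Ioc t₀ s] t₀, 0 < slope y t₀ t :=
      hten (Ioi_mem_nhds hdpos)
    have hev2 : ∀ᶠ t in 𝓝[Ioc t₀ s] t₀, t ∈ Ioc t₀ s := eventually_mem_nhdsWithin
    obtain ⟨t, hslope, htmem⟩ := (hev.and hev2).exists
    have hyt : y t < y₀ := hafter t htmem
    have : slope y t₀ t < 0 := by
      rw [slope_def_field]
      have hnum : y t - y t₀ < 0 := by linarith
      have hden : 0 < t - t₀ := sub_pos.mpr htmem.1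
      exact div_neg_of_neg_of_pos hnum hden
    linarith
  -- Step B: gradient comparison via g t = -(y t)⁻¹ - (a/4) t
  have hypos : ∀ t ∈ Icc (0:ℝ) T, 0 < y t := fun t ht =>
    lt_of_lt_of_le hy₀pos (hlow t ht)
  set g : ℝ → ℝ := fun t => -(y t)⁻¹ - a / 4 * t with hgdef
  have hgcont : ContinuousOn g (Icc 0 T) := by
    apply ContinuousOn.sub
    · exact (hcont.inv₀ fun t ht => ne_of_gt (hypos t ht)).neg
    · exact (continuous_const.mul continuous_id).continuousOn
  have hgmono : StrictMonoOn g (Icc (0:ℝ) T) := by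
    apply strictMonoOn_of_deriv_pos (convex_Icc 0 T) hgcont
    intro x hx
    rw [interior_Icc] at hx
    have hxI : x ∈ Icc (0:ℝ) T := ⟨hx.1.le, hx.2.le⟩
    have hyx : 0 < y x := hypos x hxI
    have hda : HasDerivAt y (a * (y x) ^ 2 - b * y x - c) x :=
      (hode x hxI).hasDerivAt (Icc_mem_nhds hx.1 hx.2)
    have hdg : HasDerivAt g
        (-(-(a * (y x) ^ 2 - b * y x - c) / (y x) ^ 2) - a / 4) x := by
      have h : HasDerivAt (fun t => -(y t)⁻¹ - a / 4 * t)
          (-(-(a * (y x) ^ 2 - b * y x - c) / (y x) ^ 2) - a / 4 * 1) x :=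
        ((hda.inv (ne_of_gt hyx)).neg).sub ((hasDerivAt_id x).const_mul (a/4))
      rw [mul_one] at h
      exact h
    rw [hdg.deriv]
    have hsq : 0 < (y x) ^ 2 := pow_pos hyx 2
    have hkey : a / 4 * (y x) ^ 2 < a * (y x) ^ 2 - b * y x - c := by
      have := hgrow (y x) (hlow x hxI)
      nlinarith
    have : -(-(a * (y x) ^ 2 - b * y x - c) / (y x) ^ 2) - a / 4
        = (a * (y x) ^ 2 - b * y x - c) / (y x) ^ 2 - a / 4 := by ring
    rw [this, sub_pos, lt_div_iff₀ hsq]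
    linarith
  have h0mem : (0:ℝ) ∈ Icc (0:ℝ) T := ⟨le_rfl, hT.le⟩
  have hTmem : T ∈ Icc (0:ℝ) T := ⟨hT.le, le_rfl⟩
  have hlt := hgmono h0mem hTmem hT
  have hyT : 0 < y T := hypos T hTmem
  have hg0 : g 0 = -y₀⁻¹ := by simp [hgdef, hy0]
  have hgT : g T < -(a / 4 * T) := by
    have : -(y T)⁻¹ < 0 := neg_neg_iff_pos.mpr (inv_pos.mpr hyT)
    simp only [hgdef]; linarith
  rw [hg0] at hlt
  -- so -y₀⁻¹ < -(a/4)T, i.e. a T y₀ < 4, contradicting y₀ ≥ 4/(aT)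
  have hinv : y₀ * y₀⁻¹ = 1 := mul_inv_cancel₀ (ne_of_gt hy₀pos)
  have h2 : a / 4 * T < y₀⁻¹ := by linarith
  have h3 : 4 ≤ a * T * y₀ := by
    rw [div_le_iff₀ (mul_pos ha hT)] at h4aT
    linarith
  nlinarith [mul_pos (mul_pos ha hT) hy₀pos, inv_pos.mpr hy₀pos]
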